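/- arXiv:1301.6201 — 3 statements merged into one kernel-verified Lean document; each statement's English description precedes it below -/
import Mathlib

section
/- Every isomorphism in the category of measurable spaces and stochastic maps is deterministic, i.e., if k : X → Y is a stochastic map with a two-sided inverse stochastic map, then k(x,B) ∈ {0,1} for all x ∈ X and measurable B ⊆ Y. -/
open MeasureTheory ProbabilityTheory

/-- Every isomorphism in the category `Stoch` of measurable spaces and stochastic maps is
deterministic: if `k : X → Y` is a Markov kernel with a two-sided inverse Markov kernel,
then `k x B ∈ {0, 1}` for every `x` and measurable `B`. -/
theorem stmt_7 {X Y : Type*} [MeasurableSpace X] [MeasurableSpace Y]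
    (k : Kernel X Y) [IsMarkovKernel k] (h : Kernel Y X) [IsMarkovKernel h]
    (hinv₁ : h ∘ₖ k = Kernel.id) (hinv₂ : k ∘ₖ h = Kernel.id) :
    ∀ (x : X) (B : Set Y), MeasurableSet B → k x B = 0 ∨ k x B = 1 := by
  intro x B hB
  set f : X → ENNReal := fun x' => k x' B with hf
  have hfm : Measurable f := k.measurable_coe hB
  have hfle : ∀ x', f x' ≤ 1 := fun x' => prob_le_one
  -- For each y, ∫ f ∂(h y) = χ_B y
  have key : ∀ y : Y, ∫⁻ x', f x' ∂(h y) = (Measure.dirac y) B := by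
    intro y
    rw [← Kernel.comp_apply' k h y hB, hinv₂, Kernel.id_apply]
  -- The set where f ∈ {0,1}
  set A : Set X := {x' | f x' = 0 ∨ f x' = 1} with hA
  have hAm : MeasurableSet A :=
    (hfm (measurableSet_singleton 0)).union (hfm (measurableSet_singleton 1))
  -- h y A = 1 for all y
  have hAfull : ∀ y : Y, h y A = 1 := by
    intro y
    have hky := key y
    have hae : ∀ᵐ x' ∂(h y), x' ∈ A := by
      by_cases hyB : y ∈ B
      · rw [Measure.dirac_apply' y hB, Set.indicator_of_mem hyB, Pi.one_apply] at hky
        have hsub : ∫⁻ x', (1 - f x') ∂(h y) = 0 := by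
          rw [lintegral_sub hfm (by rw [hky]; exact ENNReal.one_ne_top)
            (Filter.Eventually.of_forall hfle), hky, lintegral_one, measure_univ, tsub_self]
        have hae1 : ∀ᵐ x' ∂(h y), 1 - f x' = 0 :=
          (lintegral_eq_zero_iff (Measurable.const_sub hfm 1)).mp hsub
        filter_upwards [hae1] with x' hx'
        exact Or.inr (le_antisymm (hfle x') (tsub_eq_zero_iff_le.mp hx'))
      · rw [Measure.dirac_apply' y hB, Set.indicator_of_notMem hyB] at hky
        have hae0 : ∀ᵐ x' ∂(h y), f x' = 0 :=
          (lintegral_eq_zero_iff hfm).mp hky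
        filter_upwards [hae0] with x' hx'
        exact Or.inl hx'
    have : h y Aᶜ = 0 := by
      rw [ae_iff] at hae
      exact hae
    rwa [prob_compl_eq_zero_iff hAm] at this
  -- Now δ_x A = 1, hence x ∈ A
  have hdirac : (Measure.dirac x) A = 1 := by
    rw [← Kernel.id_apply, ← hinv₁, Kernel.comp_apply' h k x hAm]
    simp only [hAfull]
    rw [lintegral_one, measure_univ]
  have hxA : x ∈ A := by
    by_contra hx
    rw [Measure.dirac_apply' x hAm, Set.indicator_of_notMem hx] at hdirac
    exact zero_ne_one hdirac
  exact hxA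
end

section
/- A stochastic map k : X → Y into a countably generated measurable space Y is deterministic (takes values only in {0,1}) if and only if there exists a measurable function f : X → Y with k = δ_f. -/
open MeasureTheory ProbabilityTheory

lemma exists_eq_dirac_of_zero_or_one {Y : Type*} [MeasurableSpace Y]
    [MeasurableSpace.CountablyGenerated Y] (μ : Measure Y) [IsProbabilityMeasure μ]
    (h : ∀ B : Set Y, MeasurableSet B → μ B = 0 ∨ μ B = 1) :
    ∃ y : Y, μ = Measure.dirac y := by
  set s : ℕ → Set Y := MeasurableSpace.natGeneratingSequence Y with hs
  have hms : ∀ n, MeasurableSet (s n) :=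
    MeasurableSpace.measurableSet_natGeneratingSequence
  set A : Finset ℕ → Set Y := fun t => ⋂ i ∈ t, s i with hA
  have hmA : ∀ t, MeasurableSet (A t) := fun t =>
    MeasurableSet.biInter t.countable_toSet (fun i _ => hms i)
  -- the good set
  set C : Finset ℕ → Set Y := fun t => if μ (A t) = 1 then A t else (A t)ᶜ with hC
  have hmC : ∀ t, MeasurableSet (C t) := by
    intro t
    by_cases h1 : μ (A t) = 1 <;> simp [hC, h1, hmA t, (hmA t).compl]
  have hμC : ∀ t, μ (C t) = 1 := by
    intro t
    by_cases h1 : μ (A t) = 1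
    · simp [hC, h1]
    · rcases h (A t) (hmA t) with h0 | h0
      · simp [hC, h1, prob_compl_eq_one_sub (hmA t), h0]
      · exact absurd h0 h1
  have hae : ∀ᵐ y ∂μ, ∀ t : Finset ℕ, y ∈ C t := by
    rw [ae_all_iff]
    intro t
    have : {a : Y | ¬ a ∈ C t} = (C t)ᶜ := rfl
    rw [MeasureTheory.ae_iff, this, measure_compl (hmC t) (measure_ne_top _ _), hμC t]
    simp
  have hne : {y : Y | ∀ t : Finset ℕ, y ∈ C t}.Nonempty := by
    by_contra hcon
    rw [Set.not_nonempty_iff_eq_empty] at hcon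
    have h0 : μ Set.univ = 0 := by
      refine measure_mono_null (fun y _ => ?_) (MeasureTheory.ae_iff.mp hae)
      intro hy
      exact Set.eq_empty_iff_forall_notMem.mp hcon y hy
    simp at h0
  obtain ⟨y, hy⟩ := hne
  have key : ∀ t : Finset ℕ, μ (A t) = Measure.dirac y (A t) := by
    intro t
    rcases h (A t) (hmA t) with h0 | h1
    · have hyn : y ∉ A t := by
        have := hy t
        rw [hC] at this
        simp only at this
        rw [if_neg (by rw [h0]; norm_num)] at this
        exact this
      rw [h0, Measure.dirac_apply' _ (hmA t), Set.indicator_of_notMem hyn]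
    · have hyy : y ∈ A t := by
        have := hy t
        rw [hC] at this
        simpa only [if_pos h1] using this
      rw [h1, Measure.dirac_apply' _ (hmA t), Set.indicator_of_mem hyy, Pi.one_apply]
  refine ⟨y, ?_⟩
  -- π-system of finite intersections
  refine MeasureTheory.ext_of_generate_finite (Set.range A) ?_ ?_ ?_ ?_
  · -- generateFrom (range A) = the σ-algebra
    refine le_antisymm ?_ ?_
    · conv_lhs => rw [← MeasurableSpace.generateFrom_natGeneratingSequence Y]
      rw [MeasurableSpace.generateFrom_le_iff]
      rintro S ⟨n, rfl⟩
      apply MeasurableSpace.measurableSet_generateFrom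
      exact ⟨{n}, by simp [hA, hs]⟩
    · rw [MeasurableSpace.generateFrom_le_iff]
      rintro S ⟨t, rfl⟩
      exact hmA t
  · rintro S ⟨t, rfl⟩ T ⟨u, rfl⟩ -
    refine ⟨t ∪ u, ?_⟩
    ext z
    simp only [hA, Set.mem_iInter, Set.mem_inter_iff, Finset.mem_union]
    constructor
    · intro hz; exact ⟨fun i hi => hz i (Or.inl hi), fun i hi => hz i (Or.inr hi)⟩
    · rintro ⟨h1, h2⟩ i (hi | hi); exacts [h1 i hi, h2 i hi]
  · rintro S ⟨t, rfl⟩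
    exact key t
  · simp

/-- A stochastic map into a countably generated measurable space is deterministic (takes
only the values 0 and 1) if and only if it is induced by a measurable function. -/
theorem stmt_8 {X Y : Type*} [MeasurableSpace X] [MeasurableSpace Y]
    [MeasurableSpace.CountablyGenerated Y]
    (k : Kernel X Y) [IsMarkovKernel k] :
    (∀ (x : X) (B : Set Y), MeasurableSet B → k x B = 0 ∨ k x B = 1) ↔
      ∃ (f : X → Y) (hf : Measurable f), k = Kernel.deterministic f hf := by
  constructor
  · intro h
    have hd : ∀ x : X, ∃ y : Y, k x = MeasureTheory.Measure.dirac y := fun x =>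
      exists_eq_dirac_of_zero_or_one (k x) (h x)
    choose f hf using hd
    have hmf : Measurable f := by
      intro S hS
      have : f ⁻¹' S = {x : X | k x S = 1} := by
        ext x
        simp only [Set.mem_preimage, Set.mem_setOf_eq, hf x,
          MeasureTheory.Measure.dirac_apply' _ hS]
        constructor
        · intro hx; simp [Set.indicator_of_mem hx]
        · intro hx
          by_contra hxn
          rw [Set.indicator_of_notMem hxn] at hx
          simp at hx
      rw [this]
      exact (k.measurable_coe hS) (measurableSet_singleton 1)
    refine ⟨f, hmf, ?_⟩
    ext x S hS
    rw [Kernel.deterministic_apply, hf x]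
  · rintro ⟨f, hf, rfl⟩ x B hB
    rw [Kernel.deterministic_apply' hf _ hB]
    by_cases hx : f x ∈ B
    · right; simp [Set.indicator_of_mem hx]
    · left; simp [Set.indicator_of_notMem hx]
end

section
/- Every measurable space (X, Σ), regarded as an object of the symmetric monoidal category Stoch, carries a unique comonoid structure, namely the deterministic comultiplication induced by the diagonal x ↦ (x,x) and the counit induced by the unique map to the one-point space; moreover this comonoid is commutative. -/
open MeasureTheory ProbabilityTheory

/-- The monoidal product (tensor) of two kernels in `Stoch`:
`(k ⊗ l) (x, z)` is the product measure of `k x` and `l z`. -/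
noncomputable def Kernel.par {α β γ δ : Type*} [MeasurableSpace α] [MeasurableSpace β]
    [MeasurableSpace γ] [MeasurableSpace δ]
    (k : Kernel α β) (l : Kernel γ δ) [IsSFiniteKernel k] [IsSFiniteKernel l] :
    Kernel (α × γ) (β × δ) :=
  (k.comap Prod.fst measurable_fst) ×ₖ (l.comap Prod.snd measurable_snd)

section Aux

open MeasureTheory ProbabilityTheory

variable {α β γ δ : Type*} [MeasurableSpace α] [MeasurableSpace β]
  [MeasurableSpace γ] [MeasurableSpace δ]

lemma aux_id_eq {α : Type*} [MeasurableSpace α] :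
    (Kernel.id : Kernel α α) = Kernel.deterministic id measurable_id := rfl

lemma aux_comap_det {f : α → β} (hf : Measurable f) {g : γ → α} (hg : Measurable g) :
    (Kernel.deterministic f hf).comap g hg = Kernel.deterministic (f ∘ g) (hf.comp hg) := by
  ext c s hs
  simp [Kernel.comap_apply, Kernel.deterministic_apply]

lemma aux_par_det {f : α → β} {g : γ → δ} (hf : Measurable f) (hg : Measurable g) :
    Kernel.par (Kernel.deterministic f hf) (Kernel.deterministic g hg)
      = Kernel.deterministic (fun p => (f p.1, g p.2))
          (by exact (hf.comp measurable_fst).prodMk (hg.comp measurable_snd)) := by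
  unfold Kernel.par
  rw [aux_comap_det hf measurable_fst, aux_comap_det hg measurable_snd,
    Kernel.deterministic_prod_deterministic]
  rfl

lemma aux_dirac_marginals {X : Type*} [MeasurableSpace X] (μ : Measure (X × X))
    [IsProbabilityMeasure μ] (x : X)
    (h1 : μ.map Prod.fst = Measure.dirac x) (h2 : μ.map Prod.snd = Measure.dirac x) :
    μ = Measure.dirac (x, x) := by
  have hA : ∀ s : Set X, MeasurableSet s → μ (Prod.fst ⁻¹' s) = Measure.dirac x s := by
    intro s hs
    rw [← h1, Measure.map_apply measurable_fst hs]
  have hB : ∀ t : Set X, MeasurableSet t → μ (Prod.snd ⁻¹' t) = Measure.dirac x t := by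
    intro t ht
    rw [← h2, Measure.map_apply measurable_snd ht]
  refine ext_of_generate_finite _ generateFrom_prod.symm isPiSystem_prod ?_ (by simp)
  rintro - ⟨s, hs, t, ht, rfl⟩
  simp only [Set.mem_setOf_eq] at hs ht
  rw [Measure.dirac_apply' _ (hs.prod ht)]
  by_cases hxs : x ∈ s
  · by_cases hxt : x ∈ t
    · have hmem : (x, x) ∈ s ×ˢ t := ⟨hxs, hxt⟩
      have h1' : μ (Prod.fst ⁻¹' s) = 1 := by
        rw [hA s hs, Measure.dirac_apply' _ hs, Set.indicator_of_mem hxs, Pi.one_apply]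
      have h2' : μ (Prod.snd ⁻¹' t) = 1 := by
        rw [hB t ht, Measure.dirac_apply' _ ht, Set.indicator_of_mem hxt, Pi.one_apply]
      have hc1 : μ (Prod.fst ⁻¹' s)ᶜ = 0 := by
        rw [prob_compl_eq_zero_iff (measurable_fst hs)]; exact h1'
      have hc2 : μ (Prod.snd ⁻¹' t)ᶜ = 0 := by
        rw [prob_compl_eq_zero_iff (measurable_snd ht)]; exact h2'
      have hco : μ (s ×ˢ t)ᶜ = 0 := by
        have hsub : (s ×ˢ t)ᶜ ⊆ (Prod.fst ⁻¹' s)ᶜ ∪ (Prod.snd ⁻¹' t)ᶜ := by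
          intro p hp
          by_contra hcon
          simp only [Set.mem_union, Set.mem_compl_iff, not_or, not_not] at hcon
          exact hp ⟨hcon.1, hcon.2⟩
        refine le_antisymm ?_ zero_le
        calc μ (s ×ˢ t)ᶜ ≤ μ ((Prod.fst ⁻¹' s)ᶜ ∪ (Prod.snd ⁻¹' t)ᶜ) := measure_mono hsub
          _ ≤ μ (Prod.fst ⁻¹' s)ᶜ + μ (Prod.snd ⁻¹' t)ᶜ := measure_union_le _ _
          _ = 0 := by rw [hc1, hc2, add_zero]
      rw [Set.indicator_of_mem hmem, Pi.one_apply, (prob_compl_eq_zero_iff (hs.prod ht)).mp hco]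
    · have hnm : (x, x) ∉ s ×ˢ t := fun h => hxt h.2
      rw [Set.indicator_of_notMem hnm]
      refine le_antisymm ?_ zero_le
      calc μ (s ×ˢ t) ≤ μ (Prod.snd ⁻¹' t) := measure_mono fun p hp => hp.2
        _ = 0 := by rw [hB t ht, Measure.dirac_apply' _ ht, Set.indicator_of_notMem hxt]
  · have hnm : (x, x) ∉ s ×ˢ t := fun h => hxs h.1
    rw [Set.indicator_of_notMem hnm]
    refine le_antisymm ?_ zero_le
    calc μ (s ×ˢ t) ≤ μ (Prod.fst ⁻¹' s) := measure_mono fun p hp => hp.1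
      _ = 0 := by rw [hA s hs, Measure.dirac_apply' _ hs, Set.indicator_of_notMem hxs]

lemma aux_par_apply (k : Kernel α β) (l : Kernel γ δ) [IsSFiniteKernel k] [IsSFiniteKernel l]
    (p : α × γ) : Kernel.par k l p = (k p.1).prod (l p.2) := by
  unfold Kernel.par
  rw [Kernel.prod_apply, Kernel.comap_apply, Kernel.comap_apply]

lemma aux_swap_eq : Kernel.swap α β = Kernel.deterministic Prod.swap measurable_swap := rfl

end Aux

section Aux2

open MeasureTheory ProbabilityTheory

lemma aux_marginal_fst {X : Type*} [MeasurableSpace X] (Δ : Kernel X (X × X)) (ε : Kernel X Unit)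
    [IsMarkovKernel Δ] [IsMarkovKernel ε]
    (h : Kernel.deterministic (Prod.fst : X × Unit → X) measurable_fst ∘ₖ
        ((Kernel.par (Kernel.id : Kernel X X) ε) ∘ₖ Δ) = Kernel.id) (x : X) :
    (Δ x).map Prod.fst = Measure.dirac x := by
  rw [Kernel.deterministic_comp_eq_map, ← Kernel.fst_eq, Kernel.fst_comp] at h
  unfold Kernel.par at h
  rw [Kernel.fst_prod, ← Kernel.comp_deterministic_eq_comap, Kernel.id_comp,
    Kernel.deterministic_comp_eq_map] at h
  rw [← Kernel.map_apply Δ measurable_fst x, h, Kernel.id_apply]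

lemma aux_marginal_snd {X : Type*} [MeasurableSpace X] (Δ : Kernel X (X × X)) (ε : Kernel X Unit)
    [IsMarkovKernel Δ] [IsMarkovKernel ε]
    (h : Kernel.deterministic (Prod.snd : Unit × X → X) measurable_snd ∘ₖ
        ((Kernel.par ε (Kernel.id : Kernel X X)) ∘ₖ Δ) = Kernel.id) (x : X) :
    (Δ x).map Prod.snd = Measure.dirac x := by
  rw [Kernel.deterministic_comp_eq_map, ← Kernel.snd_eq, Kernel.snd_comp] at h
  unfold Kernel.par at h
  rw [Kernel.snd_prod, ← Kernel.comp_deterministic_eq_comap, Kernel.id_comp,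
    Kernel.deterministic_comp_eq_map] at h
  rw [← Kernel.map_apply Δ measurable_snd x, h, Kernel.id_apply]

end Aux2

/-- The canonical comultiplication (copy) kernel, induced by the diagonal `x ↦ (x, x)`. -/
noncomputable def Kernel.copy' (X : Type*) [MeasurableSpace X] : Kernel X (X × X) :=
  Kernel.deterministic (fun x => (x, x)) (measurable_id.prodMk measurable_id)

/-- The canonical counit (discard) kernel, induced by the unique map to the one-point space. -/
noncomputable def Kernel.discard' (X : Type*) [MeasurableSpace X] : Kernel X Unit :=
  Kernel.deterministic (fun _ => ()) measurable_const

instance {X : Type*} [MeasurableSpace X] : IsMarkovKernel (Kernel.copy' X) := by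
  unfold Kernel.copy'; infer_instance

instance {X : Type*} [MeasurableSpace X] : IsMarkovKernel (Kernel.discard' X) := by
  unfold Kernel.discard'; infer_instance

/-- Every object of `Stoch` carries a unique comonoid structure, namely the deterministic
one induced by the diagonal and the map to the one-point space; moreover it is commutative. -/
theorem stmt_10 {X : Type*} [MeasurableSpace X] :
    -- existence: the canonical copy/discard kernels form a commutative comonoid
    ((Kernel.deterministic (MeasurableEquiv.prodAssoc : (X × X) × X ≃ᵐ X × X × X)
        MeasurableEquiv.prodAssoc.measurable ∘ₖ
          ((Kernel.par (Kernel.copy' X) Kernel.id) ∘ₖ Kernel.copy' X)) =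
        (Kernel.par (Kernel.id : Kernel X X) (Kernel.copy' X)) ∘ₖ Kernel.copy' X) ∧
    ((Kernel.deterministic (Prod.fst : X × Unit → X) measurable_fst ∘ₖ
        ((Kernel.par (Kernel.id : Kernel X X) (Kernel.discard' X)) ∘ₖ Kernel.copy' X)) =
        Kernel.id) ∧
    ((Kernel.deterministic (Prod.snd : Unit × X → X) measurable_snd ∘ₖ
        ((Kernel.par (Kernel.discard' X) (Kernel.id : Kernel X X)) ∘ₖ Kernel.copy' X)) =
        Kernel.id) ∧
    (Kernel.swap X X ∘ₖ Kernel.copy' X = Kernel.copy' X) ∧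
    -- uniqueness: any comonoid structure on `X` in `Stoch` is the canonical one
    (∀ (Δ : Kernel X (X × X)) (ε : Kernel X Unit)
        [IsMarkovKernel Δ] [IsMarkovKernel ε],
      ((Kernel.deterministic (MeasurableEquiv.prodAssoc : (X × X) × X ≃ᵐ X × X × X)
          MeasurableEquiv.prodAssoc.measurable ∘ₖ ((Kernel.par Δ Kernel.id) ∘ₖ Δ)) =
          (Kernel.par (Kernel.id : Kernel X X) Δ) ∘ₖ Δ) →
      ((Kernel.deterministic (Prod.fst : X × Unit → X) measurable_fst ∘ₖ
          ((Kernel.par (Kernel.id : Kernel X X) ε) ∘ₖ Δ)) = Kernel.id) →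
      ((Kernel.deterministic (Prod.snd : Unit × X → X) measurable_snd ∘ₖ
          ((Kernel.par ε (Kernel.id : Kernel X X)) ∘ₖ Δ)) = Kernel.id) →
      Δ = Kernel.copy' X ∧ ε = Kernel.discard' X) := by
  refine ⟨?_, ?_, ?_, ?_, ?_⟩
  · unfold Kernel.copy'
    rw [Kernel.deterministic_comp_eq_map, Kernel.comp_deterministic_eq_comap,
      Kernel.comp_deterministic_eq_comap]
    refine Kernel.ext fun x => ?_
    rw [Kernel.map_apply _ MeasurableEquiv.prodAssoc.measurable, Kernel.comap_apply,
      Kernel.comap_apply, aux_par_apply, aux_par_apply]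
    simp only [Kernel.deterministic_apply, Kernel.id_apply, Measure.dirac_prod_dirac]
    rw [Measure.map_dirac' MeasurableEquiv.prodAssoc.measurable]
    rfl
  · unfold Kernel.copy' Kernel.discard'
    rw [Kernel.deterministic_comp_eq_map, Kernel.comp_deterministic_eq_comap]
    refine Kernel.ext fun x => ?_
    rw [Kernel.map_apply _ measurable_fst, Kernel.comap_apply, aux_par_apply]
    simp [Kernel.deterministic_apply, Kernel.id_apply, Measure.dirac_prod_dirac,
      Measure.map_dirac' measurable_fst]
  · unfold Kernel.copy' Kernel.discard'
    rw [Kernel.deterministic_comp_eq_map, Kernel.comp_deterministic_eq_comap]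
    refine Kernel.ext fun x => ?_
    rw [Kernel.map_apply _ measurable_snd, Kernel.comap_apply, aux_par_apply]
    simp [Kernel.deterministic_apply, Kernel.id_apply, Measure.dirac_prod_dirac,
      Measure.map_dirac' measurable_snd]
  · unfold Kernel.copy'
    rw [aux_swap_eq, Kernel.deterministic_comp_deterministic]
    rfl
  · intro Δ ε _ _ _ h1 h2
    constructor
    · refine Kernel.ext fun x => ?_
      rw [aux_dirac_marginals (Δ x) x (aux_marginal_fst Δ ε h1 x) (aux_marginal_snd Δ ε h2 x)]
      rw [Kernel.copy', Kernel.deterministic_apply]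
    · refine Kernel.ext fun x => ?_
      ext s hs
      rcases Set.eq_empty_or_nonempty s with rfl | hne
      · simp
      · have hsu : s = Set.univ := by
          refine Set.eq_univ_of_forall fun y => ?_
          rcases hne with ⟨z, hz⟩
          cases y; cases z; exact hz
        subst hsu
        simp [Kernel.discard', Kernel.deterministic_apply]
end
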